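/- Let n be a positive integer, a_1, …, a_{3n} positive integers with ∑_{j=1}^{3n} a_j = n·T and T/4 < a_j < T/2 for all j, and let D be a positive integer with D > 10·n·T. Consider the instance with n+1 agents and 3n+2 items, with additive valuations: for each original agent i ∈ {1, …, n}, v_i(x_j) = a_j for j ∈ {1, …, 3n}, v_i(x_{3n+1}) = D, and v_i(x_{3n+2}) = −D; for agent n+1, v_{n+1}(x_j) = −10·D for j ∈ {1, …, 3n}, v_{n+1}(x_{3n+1}) = T, and v_{n+1}(x_{3n+2}) = 1. Then this instance admits an EQx allocation if and only if {1, …, 3n} can be partitioned into n pairwise disjoint subsets S_1, …, S_n with ∑_{j∈S_i} a_j = T for every i. -/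

import Mathlib

/-- An allocation: pairwise disjoint bundles covering all the items. -/
def IsAllocation {ι : Type*} {n : ℕ} (A : Fin n → Finset ι) : Prop :=
  (∀ i j : Fin n, i ≠ j → Disjoint (A i) (A j)) ∧ ∀ x : ι, ∃ i : Fin n, x ∈ A i

/-- EQx for additive (possibly mixed) valuations given by per-item values. -/
def IsEQxMixed {ι : Type*} {n : ℕ} (v : Fin n → ι → ℤ) (A : Fin n → Finset ι) : Prop :=
  ∀ i j : Fin n,
    (∀ x ∈ A j, 0 ≤ v j x → (∑ y ∈ A j, v j y) - v j x ≤ ∑ y ∈ A i, v i y) ∧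
    (∀ x ∈ A i, v i x < 0 → (∑ y ∈ A i, v i y) - v i x ≥ ∑ y ∈ A j, v j y)

/-- The valuations of the reduction from 3-Partition: items `Sum.inl j` are the original items
`x_j` (`j ∈ {1, …, 3n}`), item `Sum.inr 0` is `x_{3n+1}` and item `Sum.inr 1` is `x_{3n+2}`.
Each original agent `i < n` values `x_j` at `a j`, `x_{3n+1}` at `D` and `x_{3n+2}` at `-D`;
the last agent values each `x_j` at `-10 * D`, `x_{3n+1}` at `T` and `x_{3n+2}` at `1`. -/
def threePartitionVal (n : ℕ) (T : ℤ) (a : Fin (3 * n) → ℤ) (D : ℤ) :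
    Fin (n + 1) → (Fin (3 * n) ⊕ Fin 2) → ℤ :=
  fun i =>
    if (i : ℕ) < n then
      Sum.elim (fun j => a j) (fun k : Fin 2 => if k = 0 then D else -D)
    else
      Sum.elim (fun _ => -(10 * D)) (fun k : Fin 2 => if k = 0 then T else 1)

section Helpers

private lemma sum_fin2 (R : Finset (Fin 2)) (g : Fin 2 → ℤ) :
    ∑ k ∈ R, g k = (if (0 : Fin 2) ∈ R then g 0 else 0) + (if (1 : Fin 2) ∈ R then g 1 else 0) := by
  rw [← Finset.univ_inter R, ← Finset.sum_ite_mem, Fin.sum_univ_two]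
  simp

private lemma sum_split {N : ℕ} (v : Fin N ⊕ Fin 2 → ℤ) (B : Finset (Fin N ⊕ Fin 2)) :
    ∑ y ∈ B, v y = (∑ j ∈ B.toLeft, v (Sum.inl j))
      + ((if Sum.inr 0 ∈ B then v (Sum.inr (0 : Fin 2)) else 0)
        + (if Sum.inr 1 ∈ B then v (Sum.inr (1 : Fin 2)) else 0)) := by
  conv_lhs => rw [← Finset.toLeft_disjSum_toRight (u := B)]
  rw [Finset.sum_disjSum, sum_fin2]
  simp [Finset.mem_toRight]

variable {n : ℕ} {T : ℤ} {a : Fin (3 * n) → ℤ} {D : ℤ}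

private lemma val_orig_inl {i : Fin (n + 1)} (h : (i : ℕ) < n) (j : Fin (3 * n)) :
    threePartitionVal n T a D i (Sum.inl j) = a j := by
  simp [threePartitionVal, h]

private lemma val_orig_inr0 {i : Fin (n + 1)} (h : (i : ℕ) < n) :
    threePartitionVal n T a D i (Sum.inr 0) = D := by
  simp [threePartitionVal, h]

private lemma val_orig_inr1 {i : Fin (n + 1)} (h : (i : ℕ) < n) :
    threePartitionVal n T a D i (Sum.inr 1) = -D := by
  simp [threePartitionVal, h]

private lemma val_last_inl {i : Fin (n + 1)} (h : ¬ (i : ℕ) < n) (j : Fin (3 * n)) :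
    threePartitionVal n T a D i (Sum.inl j) = -(10 * D) := by
  simp [threePartitionVal, h]

private lemma val_last_inr0 {i : Fin (n + 1)} (h : ¬ (i : ℕ) < n) :
    threePartitionVal n T a D i (Sum.inr 0) = T := by
  simp [threePartitionVal, h]

private lemma val_last_inr1 {i : Fin (n + 1)} (h : ¬ (i : ℕ) < n) :
    threePartitionVal n T a D i (Sum.inr 1) = 1 := by
  simp [threePartitionVal, h]

private lemma sumO (i : Fin (n + 1)) (hi : (i : ℕ) < n) (B : Finset (Fin (3 * n) ⊕ Fin 2)) :
    ∑ y ∈ B, threePartitionVal n T a D i y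
      = (∑ j ∈ B.toLeft, a j)
        + ((if Sum.inr 0 ∈ B then D else 0) + (if Sum.inr 1 ∈ B then -D else 0)) := by
  rw [sum_split, val_orig_inr0 hi, val_orig_inr1 hi]
  congr 1
  exact Finset.sum_congr rfl fun j _ => val_orig_inl hi j

private lemma sumL (i : Fin (n + 1)) (hi : ¬ (i : ℕ) < n) (B : Finset (Fin (3 * n) ⊕ Fin 2)) :
    ∑ y ∈ B, threePartitionVal n T a D i y
      = (B.toLeft.card : ℤ) * (-(10 * D))
        + ((if Sum.inr 0 ∈ B then T else 0) + (if Sum.inr 1 ∈ B then 1 else 0)) := by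
  rw [sum_split, val_last_inr0 hi, val_last_inr1 hi]
  congr 1
  rw [Finset.sum_congr rfl fun j _ => val_last_inl hi j, Finset.sum_const, nsmul_eq_mul]

end Helpers

/-- The 3-Partition instance has a solution iff the constructed fair division instance with
`n + 1` agents admits an EQx allocation. -/
theorem threePartition_iff_eqx (n : ℕ) (hn : 0 < n) (T : ℤ) (a : Fin (3 * n) → ℤ)
    (hpos : ∀ j, 0 < a j)
    (hsum : ∑ j, a j = n * T)
    (hlow : ∀ j, T < 4 * a j) (hhigh : ∀ j, 2 * a j < T)
    (D : ℤ) (hDpos : 0 < D) (hD : 10 * n * T < D) :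
    (∃ A : Fin (n + 1) → Finset (Fin (3 * n) ⊕ Fin 2),
        IsAllocation A ∧ IsEQxMixed (threePartitionVal n T a D) A) ↔
    (∃ S : Fin n → Finset (Fin (3 * n)),
        (∀ i j : Fin n, i ≠ j → Disjoint (S i) (S j)) ∧
        (∀ x : Fin (3 * n), ∃ i : Fin n, x ∈ S i) ∧
        ∀ i : Fin n, ∑ j ∈ S i, a j = T) := by
  set v := threePartitionVal n T a D with hvdef
  -- basic numeric facts
  have haj1 : ∀ j, 1 ≤ a j := fun j => by have := hpos j; omega
  have hD1 : 1 ≤ D := by omega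
  have hT3 : 3 ≤ T := by
    have h1 := haj1 ⟨0, by omega⟩
    have h2 := hhigh ⟨0, by omega⟩
    omega
  have hn1 : (1 : ℤ) ≤ (n : ℤ) := by exact_mod_cast hn
  have hnT : T ≤ (n : ℤ) * T := le_mul_of_one_le_left (by linarith) hn1
  have hnT0 : 0 < (n : ℤ) * T := by nlinarith
  have hDnT : 10 * ((n : ℤ) * T) < D := by
    linarith [hD, (by ring : 10 * (n : ℤ) * T = 10 * ((n : ℤ) * T))]
  have hsub : ∀ S' : Finset (Fin (3 * n)), ∑ j ∈ S', a j ≤ (n : ℤ) * T := fun S' => by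
    rw [← hsum]
    exact Finset.sum_le_sum_of_subset_of_nonneg (Finset.subset_univ _) fun j _ _ => (hpos j).le
  have hsnn : ∀ S' : Finset (Fin (3 * n)), 0 ≤ ∑ j ∈ S', a j := fun S' =>
    Finset.sum_nonneg fun j _ => (hpos j).le
  set L : Fin (n + 1) := Fin.last n with hLdef
  have hL : ¬ ((L : ℕ) < n) := by simp [hLdef]
  have hplast : ∀ p : Fin (n + 1), ¬ ((p : ℕ) < n) → p = L := fun p h =>
    Fin.ext (by have := p.isLt; simp only [hLdef, Fin.val_last]; omega)
  have he : ∀ i : Fin n, ((Fin.castSucc i : Fin (n + 1)) : ℕ) < n := fun i => by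
    simpa using i.isLt
  have heL : ∀ i : Fin n, Fin.castSucc i ≠ L := fun i h => hL (h ▸ he i)
  constructor
  · -- Forward direction
    rintro ⟨A, ⟨hdisj, hcover⟩, heqx⟩
    -- Step 1: the last agent holds no original item
    have hnoinl : ∀ j, Sum.inl j ∉ A L := by
      by_contra hcon
      push_neg at hcon
      obtain ⟨j0, hj0⟩ := hcon
      -- original agents hold no goods
      have hnog : ∀ i : Fin (n + 1), (i : ℕ) < n → ∀ x ∈ A i, ¬ (0 ≤ v i x) := by
        intro i hi x hx hvx
        have h1 := (heqx L i).1 x hx hvx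
        rw [← Finset.sum_erase_add (A i) _ hx] at h1
        have h2 : -D ≤ ∑ y ∈ (A i).erase x, v i y := by
          rw [hvdef, sumO i hi]
          have := hsnn ((A i).erase x).toLeft
          split_ifs <;> linarith
        have hjL : j0 ∈ (A L).toLeft := Finset.mem_toLeft.mpr hj0
        have hcard : (1 : ℤ) ≤ ((A L).toLeft.card : ℤ) := by
          exact_mod_cast Finset.card_pos.mpr ⟨j0, hjL⟩
        have hWL : ∑ y ∈ A L, v L y ≤ -(10 * D) + (T + 1) := by
          rw [hvdef, sumL L hL]
          have hmm : (((A L).toLeft.card : ℤ)) * (-(10 * D)) ≤ 1 * (-(10 * D)) :=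
            mul_le_mul_of_nonpos_right hcard (by linarith)
          split_ifs <;> linarith
        linarith
      -- hence all original items are with the last agent
      have hallL : (A L).toLeft = Finset.univ := by
        ext j
        simp only [Finset.mem_univ, iff_true, Finset.mem_toLeft]
        obtain ⟨p, hp⟩ := hcover (Sum.inl j)
        rcases lt_or_ge (p : ℕ) n with h | h
        · exact absurd (by rw [hvdef, val_orig_inl h]; exact (hpos j).le) (hnog p h _ hp)
        · rwa [hplast p (not_lt.mpr h)] at hp
      have hi0 : ((Fin.castSucc (⟨0, hn⟩ : Fin n) : Fin (n + 1)) : ℕ) < n := he _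
      have h2 := (heqx L (Fin.castSucc ⟨0, hn⟩)).2 (Sum.inl j0) hj0
        (by rw [hvdef, val_last_inl hL]; linarith)
      have hlow2 : -D ≤ ∑ y ∈ A (Fin.castSucc ⟨0, hn⟩), v (Fin.castSucc ⟨0, hn⟩) y := by
        rw [hvdef, sumO _ hi0]
        have := hsnn (A (Fin.castSucc ⟨0, hn⟩)).toLeft
        split_ifs <;> linarith
      have h3n : (3 : ℤ) ≤ (((A L).toLeft.card : ℕ) : ℤ) := by
        rw [hallL, Finset.card_univ, Fintype.card_fin]
        exact_mod_cast (by omega : 3 ≤ 3 * n)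
      have hWL : ∑ y ∈ A L, v L y ≤ 3 * (-(10 * D)) + (T + 1) := by
        rw [hvdef, sumL L hL]
        have hmm : (((A L).toLeft.card : ℤ)) * (-(10 * D)) ≤ 3 * (-(10 * D)) :=
          mul_le_mul_of_nonpos_right h3n (by linarith)
        split_ifs <;> linarith
      rw [hvdef, val_last_inl hL] at h2
      linarith
    -- the partition candidate
    set S : Fin n → Finset (Fin (3 * n)) := fun i => (A (Fin.castSucc i)).toLeft with hSdef
    have hSdisj : ∀ i j : Fin n, i ≠ j → Disjoint (S i) (S j) := by
      intro i j hij
      rw [Finset.disjoint_left]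
      intro x hx hx'
      exact Finset.disjoint_left.mp
        (hdisj _ _ fun h => hij (Fin.castSucc_injective n h))
        (Finset.mem_toLeft.mp hx) (Finset.mem_toLeft.mp hx')
    have hScover : ∀ x : Fin (3 * n), ∃ i : Fin n, x ∈ S i := by
      intro x
      obtain ⟨p, hp⟩ := hcover (Sum.inl x)
      have hpn : (p : ℕ) < n := by
        by_contra h
        exact hnoinl x (hplast p h ▸ hp)
      refine ⟨⟨p, hpn⟩, Finset.mem_toLeft.mpr ?_⟩
      have : Fin.castSucc (⟨p, hpn⟩ : Fin n) = p := Fin.ext (by simp)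
      rwa [this]
    have hSsum : ∑ i, (∑ j ∈ S i, a j) = (n : ℤ) * T := by
      have hU : (Finset.univ : Finset (Fin (3 * n))) = Finset.univ.biUnion S := by
        ext x
        simp only [Finset.mem_univ, true_iff, Finset.mem_biUnion]
        obtain ⟨i, hi⟩ := hScover x
        exact ⟨i, by simp, hi⟩
      rw [← hsum, hU, Finset.sum_biUnion]
      intro i _ j _ hij
      exact hSdisj i j hij
    -- locate the two special items
    obtain ⟨p0, hp0⟩ := hcover (Sum.inr 0)
    obtain ⟨p1, hp1⟩ := hcover (Sum.inr 1)
    have hALempty : (A L).toLeft = ∅ := by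
      ext j; simp [Finset.mem_toLeft, hnoinl j]
    have huniv : (Finset.univ : Finset (Fin n)).Nonempty := ⟨⟨0, hn⟩, Finset.mem_univ _⟩
    have hconstT : ∑ _i : Fin n, T = (n : ℤ) * T := by
      rw [Finset.sum_const, Finset.card_univ, Fintype.card_fin, nsmul_eq_mul]
    obtain ⟨imax, _, hmax⟩ := Finset.exists_le_of_sum_le (f := fun _ => T)
      (g := fun i => ∑ j ∈ S i, a j) huniv (by rw [hconstT, hSsum])
    have hSne : (S imax).Nonempty := by
      by_contra h
      rw [Finset.not_nonempty_iff_eq_empty] at h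
      rw [h, Finset.sum_empty] at hmax
      linarith
    rcases lt_or_ge (p0 : ℕ) n with h0 | h0
    · -- the good x_{3n+1} is with an original agent c : contradiction
      exfalso
      obtain ⟨c, hp0c⟩ : ∃ c : Fin n, Sum.inr 0 ∈ A (Fin.castSucc c) := by
        refine ⟨⟨p0, h0⟩, ?_⟩
        have : Fin.castSucc (⟨p0, h0⟩ : Fin n) = p0 := Fin.ext (by simp)
        rwa [this]
      rcases lt_or_ge (p1 : ℕ) n with h1 | h1
      · -- x_{3n+2} with an original agent d
        obtain ⟨d, hp1d⟩ : ∃ d : Fin n, Sum.inr 1 ∈ A (Fin.castSucc d) := by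
          refine ⟨⟨p1, h1⟩, ?_⟩
          have : Fin.castSucc (⟨p1, h1⟩ : Fin n) = p1 := Fin.ext (by simp)
          rwa [this]
        by_cases hdc : d = c
        · -- both special items with the same original agent c
          subst hdc
          have hWL : ∑ y ∈ A L, v L y = 0 := by
            rw [hvdef, sumL L hL, hALempty]
            have h0' : Sum.inr 0 ∉ A L :=
              fun h => Finset.disjoint_left.mp (hdisj _ _ (heL d)) hp0c h
            have h1' : Sum.inr 1 ∉ A L :=
              fun h => Finset.disjoint_left.mp (hdisj _ _ (heL d)) hp1d h
            simp [h0', h1']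
          have hWi : ∀ i : Fin n, ∑ y ∈ A (Fin.castSucc i), v (Fin.castSucc i) y
              = ∑ j ∈ S i, a j := by
            intro i
            rw [hvdef, sumO _ (he i)]
            simp only [hSdef]
            by_cases hic : i = d
            · subst hic; rw [if_pos hp0c, if_pos hp1d]; ring
            · have hne : Fin.castSucc i ≠ Fin.castSucc d :=
                fun h => hic (Fin.castSucc_injective n h)
              have h0' : Sum.inr 0 ∉ A (Fin.castSucc i) :=
                fun h => Finset.disjoint_left.mp (hdisj _ _ hne) h hp0c
              have h1' : Sum.inr 1 ∉ A (Fin.castSucc i) :=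
                fun h => Finset.disjoint_left.mp (hdisj _ _ hne) h hp1d
              rw [if_neg h0', if_neg h1']; ring
          have h2s : ∀ i : Fin n, 2 * (∑ j ∈ S i, a j) < T := by
            intro i
            rcases Finset.eq_empty_or_nonempty (S i) with h | ⟨x, hx⟩
            · rw [h, Finset.sum_empty]; linarith
            · have hmem : Sum.inl x ∈ A (Fin.castSucc i) := Finset.mem_toLeft.mp hx
              have h := (heqx L (Fin.castSucc i)).1 (Sum.inl x) hmem
                (by rw [hvdef, val_orig_inl (he i)]; exact (hpos x).le)
              rw [hWi i, hWL, hvdef, val_orig_inl (he i)] at h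
              have := hhigh x
              linarith
          have hlt := Finset.sum_lt_sum_of_nonempty huniv fun i _ => h2s i
          rw [← Finset.mul_sum, hSsum, hconstT] at hlt
          linarith
        · -- x_{3n+2} with a different original agent d ≠ c
          have h := (heqx (Fin.castSucc d) (Fin.castSucc c)).2 (Sum.inr 1) hp1d
            (by rw [hvdef, val_orig_inr1 (he d)]; linarith)
          have hned : Fin.castSucc d ≠ Fin.castSucc c :=
            fun hh => hdc (Fin.castSucc_injective n hh)
          have hWd : ∑ y ∈ A (Fin.castSucc d), v (Fin.castSucc d) y
              = ∑ j ∈ S d, a j - D := by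
            rw [hvdef, sumO _ (he d)]
            simp only [hSdef]
            have h0' : Sum.inr 0 ∉ A (Fin.castSucc d) :=
              fun hh => Finset.disjoint_left.mp (hdisj _ _ hned) hh hp0c
            rw [if_neg h0', if_pos hp1d]; ring
          have hWc : ∑ y ∈ A (Fin.castSucc c), v (Fin.castSucc c) y
              = ∑ j ∈ S c, a j + D := by
            rw [hvdef, sumO _ (he c)]
            simp only [hSdef]
            have h1' : Sum.inr 1 ∉ A (Fin.castSucc c) :=
              fun hh => Finset.disjoint_left.mp (hdisj _ _ hned) hp1d hh
            rw [if_pos hp0c, if_neg h1']; ring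
          rw [hWd, hWc, hvdef, val_orig_inr1 (he d)] at h
          have hd1 := hsub (S d)
          have hc1 := hsnn (S c)
          linarith
      · -- x_{3n+2} with the last agent
        have hp1L : Sum.inr 1 ∈ A L := hplast p1 (not_lt.mpr h1) ▸ hp1
        have hWL : ∑ y ∈ A L, v L y = 1 := by
          rw [hvdef, sumL L hL, hALempty]
          have h0' : Sum.inr 0 ∉ A L :=
            fun h => Finset.disjoint_left.mp (hdisj _ _ (heL c)) hp0c h
          simp [h0', hp1L]
        obtain ⟨x, hx⟩ := hSne
        have hmem : Sum.inl x ∈ A (Fin.castSucc imax) := Finset.mem_toLeft.mp hx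
        have h := (heqx L (Fin.castSucc imax)).1 (Sum.inl x) hmem
          (by rw [hvdef, val_orig_inl (he imax)]; exact (hpos x).le)
        rw [hvdef, val_orig_inl (he imax)] at h
        by_cases hic : imax = c
        · have hWc : ∑ y ∈ A (Fin.castSucc imax), v (Fin.castSucc imax) y
              = ∑ j ∈ S imax, a j + D := by
            rw [hvdef, sumO _ (he imax)]
            simp only [hSdef]
            have h1' : Sum.inr 1 ∉ A (Fin.castSucc imax) :=
              fun hh => Finset.disjoint_left.mp (hdisj _ _ (heL imax)) hh hp1L
            rw [hic, if_pos hp0c]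
            rw [if_neg (hic ▸ h1')]; ring
          rw [hWc, hWL] at h
          have := hhigh x
          have := hpos x
          linarith
        · have hnec : Fin.castSucc imax ≠ Fin.castSucc c :=
            fun hh => hic (Fin.castSucc_injective n hh)
          have hWi : ∑ y ∈ A (Fin.castSucc imax), v (Fin.castSucc imax) y
              = ∑ j ∈ S imax, a j := by
            rw [hvdef, sumO _ (he imax)]
            simp only [hSdef]
            have h0' : Sum.inr 0 ∉ A (Fin.castSucc imax) :=
              fun hh => Finset.disjoint_left.mp (hdisj _ _ hnec) hh hp0c
            have h1' : Sum.inr 1 ∉ A (Fin.castSucc imax) :=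
              fun hh => Finset.disjoint_left.mp (hdisj _ _ (heL imax)) hh hp1L
            rw [if_neg h0', if_neg h1']; ring
          rw [hWi, hWL] at h
          have := hhigh x
          have := haj1 x
          linarith
    · -- the good x_{3n+1} is with the last agent
      have hp0L : Sum.inr 0 ∈ A L := hplast p0 (not_lt.mpr h0) ▸ hp0
      rcases lt_or_ge (p1 : ℕ) n with h1 | h1
      · -- x_{3n+2} with an original agent d : contradiction
        exfalso
        obtain ⟨d, hp1d⟩ : ∃ d : Fin n, Sum.inr 1 ∈ A (Fin.castSucc d) := by
          refine ⟨⟨p1, h1⟩, ?_⟩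
          have : Fin.castSucc (⟨p1, h1⟩ : Fin n) = p1 := Fin.ext (by simp)
          rwa [this]
        have hWL : ∑ y ∈ A L, v L y = T := by
          rw [hvdef, sumL L hL, hALempty]
          have h1' : Sum.inr 1 ∉ A L :=
            fun h => Finset.disjoint_left.mp (hdisj _ _ (heL d)) hp1d h
          simp [hp0L, h1']
        have hWd : ∑ y ∈ A (Fin.castSucc d), v (Fin.castSucc d) y
            = ∑ j ∈ S d, a j - D := by
          rw [hvdef, sumO _ (he d)]
          simp only [hSdef]
          have h0' : Sum.inr 0 ∉ A (Fin.castSucc d) :=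
            fun hh => Finset.disjoint_left.mp (hdisj _ _ (heL d)) hh hp0L
          rw [if_neg h0', if_pos hp1d]; ring
        have h := (heqx (Fin.castSucc d) L).1 (Sum.inr 0) hp0L
          (by rw [hvdef, val_last_inr0 hL]; linarith)
        rw [hWL, hWd, hvdef, val_last_inr0 hL] at h
        have := hsub (S d)
        linarith
      · -- both special items with the last agent : extract the partition
        have hp1L : Sum.inr 1 ∈ A L := hplast p1 (not_lt.mpr h1) ▸ hp1
        have hWL : ∑ y ∈ A L, v L y = T + 1 := by
          rw [hvdef, sumL L hL, hALempty]
          simp [hp0L, hp1L]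
        have hWi : ∀ i : Fin n, ∑ y ∈ A (Fin.castSucc i), v (Fin.castSucc i) y
            = ∑ j ∈ S i, a j := by
          intro i
          rw [hvdef, sumO _ (he i)]
          simp only [hSdef]
          have h0' : Sum.inr 0 ∉ A (Fin.castSucc i) :=
            fun hh => Finset.disjoint_left.mp (hdisj _ _ (heL i)) hh hp0L
          have h1' : Sum.inr 1 ∉ A (Fin.castSucc i) :=
            fun hh => Finset.disjoint_left.mp (hdisj _ _ (heL i)) hh hp1L
          rw [if_neg h0', if_neg h1']; ring
        have hge : ∀ i : Fin n, T ≤ ∑ j ∈ S i, a j := by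
          intro i
          have h := (heqx (Fin.castSucc i) L).1 (Sum.inr 1) hp1L
            (by rw [hvdef, val_last_inr1 hL]; norm_num)
          rw [hWL, hWi i, hvdef, val_last_inr1 hL] at h
          linarith
        refine ⟨S, hSdisj, hScover, ?_⟩
        intro i
        by_contra hne
        have hgt : T < ∑ j ∈ S i, a j := lt_of_le_of_ne (hge i) (Ne.symm hne)
        have hlt := Finset.sum_lt_sum (fun j _ => hge j) ⟨i, Finset.mem_univ i, hgt⟩
        rw [hSsum, hconstT] at hlt
        exact lt_irrefl _ hlt
  · -- Backward direction
    rintro ⟨S, hdisj, hcover, hTsum⟩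
    set A : Fin (n + 1) → Finset (Fin (3 * n) ⊕ Fin 2) := fun p =>
      if h : (p : ℕ) < n then (S ⟨p, h⟩).image Sum.inl else {Sum.inr 0, Sum.inr 1} with hAdef
    have hAp : ∀ (p : Fin (n + 1)) (h : (p : ℕ) < n),
        A p = (S ⟨p, h⟩).image Sum.inl := by
      intro p h; simp only [hAdef]; rw [dif_pos h]
    have hApL : ∀ (p : Fin (n + 1)), ¬ ((p : ℕ) < n) →
        A p = {Sum.inr 0, Sum.inr 1} := by
      intro p h; simp only [hAdef]; rw [dif_neg h]
    refine ⟨A, ⟨?_, ?_⟩, ?_⟩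
    · -- disjoint
      intro i j hij
      by_cases hi : (i : ℕ) < n <;> by_cases hj : (j : ℕ) < n
      · rw [hAp i hi, hAp j hj, Finset.disjoint_image Sum.inl_injective]
        exact hdisj _ _ fun h => hij (Fin.ext (by simpa using h))
      · rw [hAp i hi, hApL j hj, Finset.disjoint_left]
        rintro x hx hx'
        obtain ⟨t, _, rfl⟩ := Finset.mem_image.mp hx
        simp at hx'
      · rw [hApL i hi, hAp j hj, Finset.disjoint_right]
        rintro x hx hx'
        obtain ⟨t, _, rfl⟩ := Finset.mem_image.mp hx
        simp at hx'
      · have hi' := i.isLt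
        have hj' := j.isLt
        exact absurd (Fin.ext (by omega : (i : ℕ) = (j : ℕ))) hij
    · -- cover
      intro x
      rcases x with j | k
      · obtain ⟨i, hi⟩ := hcover j
        refine ⟨Fin.castSucc i, ?_⟩
        rw [hAp _ (he i)]
        have hcast : (⟨((Fin.castSucc i : Fin (n + 1)) : ℕ), he i⟩ : Fin n) = i :=
          Fin.ext (by simp)
        rw [hcast]
        exact Finset.mem_image_of_mem _ hi
      · refine ⟨L, ?_⟩
        rw [hApL L hL]
        fin_cases k <;> simp
    · -- EQx
      have hval : ∀ p : Fin (n + 1),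
          ∑ y ∈ A p, v p y = if (p : ℕ) < n then T else T + 1 := by
        intro p
        by_cases hp : (p : ℕ) < n
        · rw [hAp p hp, if_pos hp, hvdef,
            Finset.sum_image (fun x _ y _ h => Sum.inl_injective h)]
          rw [Finset.sum_congr rfl fun j _ => val_orig_inl hp j]
          exact hTsum _
        · rw [hApL p hp, if_neg hp, hvdef,
            Finset.sum_pair (by simp : (Sum.inr 0 : Fin (3 * n) ⊕ Fin 2) ≠ Sum.inr 1),
            val_last_inr0 hp, val_last_inr1 hp]
      intro i j
      constructor
      · intro x hx hvx
        rw [hval i, hval j]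
        by_cases hj : (j : ℕ) < n
        · rw [hAp j hj] at hx
          obtain ⟨t, _, rfl⟩ := Finset.mem_image.mp hx
          rw [hvdef, val_orig_inl hj]
          have := haj1 t
          split_ifs <;> linarith
        · rw [hApL j hj] at hx
          rw [if_neg hj]
          rcases Finset.mem_insert.mp hx with h | h
          · subst h; rw [hvdef, val_last_inr0 hj]; split_ifs <;> linarith
          · rw [Finset.mem_singleton] at h
            subst h; rw [hvdef, val_last_inr1 hj]; split_ifs <;> linarith
      · intro x hx hvx
        exfalso
        by_cases hi : (i : ℕ) < n
        · rw [hAp i hi] at hx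
          obtain ⟨t, _, rfl⟩ := Finset.mem_image.mp hx
          rw [hvdef, val_orig_inl hi] at hvx
          have := hpos t
          linarith
        · rw [hApL i hi] at hx
          rcases Finset.mem_insert.mp hx with h | h
          · subst h; rw [hvdef, val_last_inr0 hi] at hvx; linarith
          · rw [Finset.mem_singleton] at h
            subst h; rw [hvdef, val_last_inr1 hi] at hvx; linarith
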